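/- arXiv:1504.02052 — 3 statements merged into one kernel-verified Lean document; each statement's English description precedes it below -/
import Mathlib

section
/- Any lex-optimal allocation is strongly stable: for every subset S of nodes, there is no allocation d̂ on the induced subgraph G_S (each node in S distributing its full endowment to its neighbors within S) such that every node in S receives at least as much as under the lex-optimal allocation and at least one node in S receives strictly more. -/
open Finset

noncomputable section

variable {V : Type*}

/-- An allocation: nonnegative, supported on edges, each node distributes its full endowment. -/
def IsAlloc [Fintype V] [DecidableEq V] (G : SimpleGraph V) [DecidableRel G.Adj]
    (D : V → ℝ) (d : V → V → ℝ) : Prop :=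
  (∀ i j, 0 ≤ d i j) ∧ (∀ i j, ¬ G.Adj i j → d i j = 0) ∧
  (∀ i, ∑ j ∈ G.neighborFinset i, d i j = D i)

/-- Received resource of node `i`. -/
def recv [Fintype V] [DecidableEq V] (G : SimpleGraph V) [DecidableRel G.Adj]
    (d : V → V → ℝ) (i : V) : ℝ := ∑ j ∈ G.neighborFinset i, d j i

/-- Exchange ratio of node `i`. -/
def ratio [Fintype V] [DecidableEq V] (G : SimpleGraph V) [DecidableRel G.Adj]
    (D : V → ℝ) (d : V → V → ℝ) (i : V) : ℝ := recv G d i / D i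

/-- Total resource flowing into `S` from outside. -/
def inFlow [Fintype V] [DecidableEq V] (G : SimpleGraph V) [DecidableRel G.Adj]
    (d : V → V → ℝ) (S : Finset V) : ℝ :=
  ∑ i ∈ S, ∑ j ∈ G.neighborFinset i \ S, d j i

/-- Total resource flowing out of `S`. -/
def outFlow [Fintype V] [DecidableEq V] (G : SimpleGraph V) [DecidableRel G.Adj]
    (d : V → V → ℝ) (S : Finset V) : ℝ :=
  ∑ i ∈ S, ∑ j ∈ G.neighborFinset i \ S, d i j

/-- Sorted (non-decreasing) list of exchange ratios. -/
def sortedRatios [Fintype V] [DecidableEq V] (G : SimpleGraph V) [DecidableRel G.Adj]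
    (D : V → ℝ) (d : V → V → ℝ) : List ℝ :=
  (Finset.univ.val.map (ratio G D d)).sort (· ≤ ·)

/-- Lexicographic optimality: no allocation gives a lexicographically larger sorted ratio vector. -/
def LexOpt [Fintype V] [DecidableEq V] (G : SimpleGraph V) [DecidableRel G.Adj]
    (D : V → ℝ) (d : V → V → ℝ) : Prop :=
  IsAlloc G D d ∧ ∀ d', IsAlloc G D d' →
    ¬ List.Lex (· < ·) (sortedRatios G D d) (sortedRatios G D d')

/-- Minimum exchange ratio. -/
def minRatio [Fintype V] [Nonempty V] [DecidableEq V] (G : SimpleGraph V) [DecidableRel G.Adj]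
    (D : V → ℝ) (d : V → V → ℝ) : ℝ := Finset.univ.inf' Finset.univ_nonempty (ratio G D d)

/-- Maximum exchange ratio. -/
def maxRatio [Fintype V] [Nonempty V] [DecidableEq V] (G : SimpleGraph V) [DecidableRel G.Adj]
    (D : V → ℝ) (d : V → V → ℝ) : ℝ := Finset.univ.sup' Finset.univ_nonempty (ratio G D d)

/-- The set `L₁` of nodes attaining the minimum exchange ratio. -/
def minSet [Fintype V] [Nonempty V] [DecidableEq V] (G : SimpleGraph V) [DecidableRel G.Adj]
    (D : V → ℝ) (d : V → V → ℝ) : Finset V :=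
  Finset.univ.filter (fun i => ratio G D d i = minRatio G D d)

/-- The set `L_K` of nodes attaining the maximum exchange ratio. -/
def maxSet [Fintype V] [Nonempty V] [DecidableEq V] (G : SimpleGraph V) [DecidableRel G.Adj]
    (D : V → ℝ) (d : V → V → ℝ) : Finset V :=
  Finset.univ.filter (fun i => ratio G D d i = maxRatio G D d)

/-- External neighborhood of a set of nodes. -/
def extNbhd [Fintype V] [DecidableEq V] (G : SimpleGraph V) [DecidableRel G.Adj]
    (S : Finset V) : Finset V := (S.biUnion fun i => G.neighborFinset i) \ S

/-- An allocation on the subgraph induced by `S`: each node of `S` distributes its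
full endowment among its neighbors within `S` (if it has any), nothing flows elsewhere. -/
def AllocOn [Fintype V] [DecidableEq V] (G : SimpleGraph V) [DecidableRel G.Adj]
    (D : V → ℝ) (S : Finset V) (d : V → V → ℝ) : Prop :=
  (∀ i j, 0 ≤ d i j) ∧
  (∀ i j, ¬ (i ∈ S ∧ j ∈ S ∧ G.Adj i j) → d i j = 0) ∧
  (∀ i ∈ S, (G.neighborFinset i ∩ S).Nonempty →
    ∑ j ∈ G.neighborFinset i ∩ S, d i j = D i)

lemma lex_of_sorted_lists : ∀ (L M : List ℝ), L.Pairwise (· ≤ ·) → M.Pairwise (· ≤ ·) →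
    L.length = M.length → ∀ w : ℝ, w ∈ ((↑L : Multiset ℝ) - ↑M) →
    (∀ z ∈ ((↑L : Multiset ℝ) - ↑M), w ≤ z) → (∀ z ∈ ((↑M : Multiset ℝ) - ↑L), w < z) →
    List.Lex (· < ·) L M := by
  intro L
  induction L with
  | nil =>
    intro M _ _ _ w hw _ _
    have h0 : ((↑([] : List ℝ) : Multiset ℝ) - ↑M) = 0 := tsub_eq_zero_of_le (by simp)
    rw [h0] at hw
    simp at hw
  | cons a L' ih =>
    intro M hLs hMs hlen w hw h1 h2
    cases M with
    | nil => simp at hlen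
    | cons b M' =>
      rcases lt_trichotomy a b with hab | hab | hab
      · exact List.Lex.rel hab
      · subst hab
        apply List.Lex.cons
        have hsub : ((↑(a :: L') : Multiset ℝ) - ↑(a :: M')) = ((↑L' : Multiset ℝ) - ↑M') := by
          rw [← Multiset.cons_coe, ← Multiset.cons_coe]
          ext z
          rw [Multiset.count_sub, Multiset.count_sub, Multiset.count_cons, Multiset.count_cons]
          split <;> omega
        have hsub' : ((↑(a :: M') : Multiset ℝ) - ↑(a :: L')) = ((↑M' : Multiset ℝ) - ↑L') := by
          rw [← Multiset.cons_coe, ← Multiset.cons_coe]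
          ext z
          rw [Multiset.count_sub, Multiset.count_sub, Multiset.count_cons, Multiset.count_cons]
          split <;> omega
        rw [hsub] at hw h1
        rw [hsub'] at h2
        exact ih M' (List.pairwise_cons.mp hLs).2 (List.pairwise_cons.mp hMs).2
          (by simpa using hlen) w hw h1 h2
      · exfalso
        have hbL : b ∉ (a :: L') := by
          intro hmem
          rcases List.mem_cons.mp hmem with h | h
          · exact absurd h.symm (ne_of_gt hab)
          · have := (List.pairwise_cons.mp hLs).1 b h
            exact absurd this (not_le.mpr hab)
        have hbML : b ∈ ((↑(b :: M') : Multiset ℝ) - ↑(a :: L')) := by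
          rw [← Multiset.count_pos, Multiset.count_sub]
          have h0 : Multiset.count b (↑(a :: L') : Multiset ℝ) = 0 :=
            Multiset.count_eq_zero.mpr (fun hc => hbL (by simpa using hc))
          have h1' : 0 < Multiset.count b (↑(b :: M') : Multiset ℝ) := by
            rw [Multiset.count_pos]
            simp
          omega
        have hwb := h2 b hbML
        have hwL : w ∈ (a :: L') := by
          have : w ∈ (↑(a :: L') : Multiset ℝ) := Multiset.mem_of_le (Multiset.sub_le_self _ _) hw
          simpa using this
        have haw : a ≤ w := by
          rcases List.mem_cons.mp hwL with h | h
          · exact le_of_eq h.symm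
          · exact (List.pairwise_cons.mp hLs).1 w h
        linarith

lemma lex_of_multisets (s t : Multiset ℝ) (hcard : Multiset.card s = Multiset.card t) (w : ℝ)
    (hw : w ∈ s - t) (h1 : ∀ z ∈ s - t, w ≤ z) (h2 : ∀ z ∈ t - s, w < z) :
    List.Lex (· < ·) (s.sort (· ≤ ·)) (t.sort (· ≤ ·)) := by
  apply lex_of_sorted_lists _ _ (Multiset.pairwise_sort _ _) (Multiset.pairwise_sort _ _)
  · rw [Multiset.length_sort, Multiset.length_sort]; exact hcard
  · rwa [Multiset.sort_eq, Multiset.sort_eq]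
  · rwa [Multiset.sort_eq, Multiset.sort_eq]
  · rwa [Multiset.sort_eq, Multiset.sort_eq]

section Main

variable [Fintype V] [DecidableEq V] (G : SimpleGraph V) [DecidableRel G.Adj]
  (D : V → ℝ) (d : V → V → ℝ)

lemma recv_nonneg (h : ∀ i j, 0 ≤ d i j) (i : V) : 0 ≤ recv G d i :=
  Finset.sum_nonneg (fun j _ => h j i)

lemma ratio_nonneg (hD : ∀ i, 0 < D i) (h : ∀ i j, 0 ≤ d i j) (i : V) : 0 ≤ ratio G D d i :=
  div_nonneg (recv_nonneg G d h i) (hD i).le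

lemma recv_eq_ratio_mul (hD : ∀ i, 0 < D i) (i : V) : recv G d i = ratio G D d i * D i := by
  rw [ratio, div_mul_cancel₀]
  exact (hD i).ne'

lemma rule (hD : ∀ i, 0 < D i) (hopt : LexOpt G D d) {j i m : V}
    (hji : G.Adj j i) (hjm : G.Adj j m) (hlt : ratio G D d i < ratio G D d m) :
    d j m = 0 := by
  set ρ := ratio G D d with hρ
  by_contra hne
  have halloc := hopt.1
  have hpos : 0 < d j m := lt_of_le_of_ne (halloc.1 j m) (Ne.symm hne)
  have him : i ≠ m := fun h => absurd rfl (by rw [h] at hlt; exact ne_of_lt hlt)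
  set δ : ℝ := min (d j m) (D m * (ρ m - ρ i) / 2) with hδ
  have hδpos : 0 < δ := lt_min hpos (div_pos (mul_pos (hD m) (sub_pos.mpr hlt)) two_pos)
  have hδle : δ ≤ d j m := min_le_left _ _
  have hδle2 : δ / D m ≤ (ρ m - ρ i) / 2 := by
    rw [div_le_div_iff₀ (hD m) (by norm_num)]
    calc δ * 2 ≤ (D m * (ρ m - ρ i) / 2) * 2 := by nlinarith [min_le_right (d j m) (D m * (ρ m - ρ i) / 2)]
    _ = (ρ m - ρ i) * D m := by ring
  set d' : V → V → ℝ := fun a b =>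
    d a b + (if a = j ∧ b = i then δ else 0) - (if a = j ∧ b = m then δ else 0) with hd'
  have halloc' : IsAlloc G D d' := by
    refine ⟨?_, ?_, ?_⟩
    · intro a b
      simp only [hd']
      by_cases h1 : a = j ∧ b = i
      · have h2 : ¬ (a = j ∧ b = m) := fun h => him (h1.2.symm.trans h.2)
        rw [if_pos h1, if_neg h2]
        have := halloc.1 a b
        linarith
      · rw [if_neg h1]
        by_cases h2 : a = j ∧ b = m
        · rw [if_pos h2, h2.1, h2.2]
          linarith
        · rw [if_neg h2]
          simpa using halloc.1 a b
    · intro a b hnadj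
      have h1 : ¬ (a = j ∧ b = i) := fun h => hnadj (h.1 ▸ h.2 ▸ hji)
      have h2 : ¬ (a = j ∧ b = m) := fun h => hnadj (h.1 ▸ h.2 ▸ hjm)
      simp only [hd', if_neg h1, if_neg h2, halloc.2.1 a b hnadj]
      ring
    · intro a
      simp only [hd']
      rw [Finset.sum_sub_distrib, Finset.sum_add_distrib]
      by_cases ha : a = j
      · subst ha
        have hsum1 : ∑ b ∈ G.neighborFinset a, (if a = a ∧ b = i then δ else 0) = δ := by
          simp only [true_and]
          rw [Finset.sum_ite_eq' (G.neighborFinset a) i (fun _ => δ)]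
          rw [if_pos ((SimpleGraph.mem_neighborFinset G a i).mpr hji)]
        have hsum2 : ∑ b ∈ G.neighborFinset a, (if a = a ∧ b = m then δ else 0) = δ := by
          simp only [true_and]
          rw [Finset.sum_ite_eq' (G.neighborFinset a) m (fun _ => δ)]
          rw [if_pos ((SimpleGraph.mem_neighborFinset G a m).mpr hjm)]
        rw [hsum1, hsum2, halloc.2.2 a]
        ring
      · have hsum1 : ∑ b ∈ G.neighborFinset a, (if a = j ∧ b = i then δ else 0) = 0 := by
          apply Finset.sum_eq_zero; intro b _; rw [if_neg (fun h => ha h.1)]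
        have hsum2 : ∑ b ∈ G.neighborFinset a, (if a = j ∧ b = m then δ else 0) = 0 := by
          apply Finset.sum_eq_zero; intro b _; rw [if_neg (fun h => ha h.1)]
        rw [hsum1, hsum2, halloc.2.2 a]
        ring
  -- recv values
  have hrecv : ∀ y : V, recv G d' y
      = recv G d y + (if y = i then δ else 0) - (if y = m then δ else 0) := by
    intro y
    simp only [recv, hd']
    rw [Finset.sum_sub_distrib, Finset.sum_add_distrib]
    congr 1
    · congr 1
      by_cases hy : y = i
      · rw [if_pos hy]
        rw [show (fun b => if b = j ∧ y = i then δ else 0) = fun b => if b = j then δ else 0 by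
          funext b; simp [hy]]
        rw [Finset.sum_ite_eq' (G.neighborFinset y) j (fun _ => δ)]
        rw [if_pos ((SimpleGraph.mem_neighborFinset G y j).mpr (by rw [hy]; exact hji.symm))]
      · rw [if_neg hy]
        apply Finset.sum_eq_zero; intro b _; rw [if_neg (fun h => hy h.2)]
    · by_cases hy : y = m
      · rw [if_pos hy]
        rw [show (fun b => if b = j ∧ y = m then δ else 0) = fun b => if b = j then δ else 0 by
          funext b; simp [hy]]
        rw [Finset.sum_ite_eq' (G.neighborFinset y) j (fun _ => δ)]
        rw [if_pos ((SimpleGraph.mem_neighborFinset G y j).mpr (by rw [hy]; exact hjm.symm))]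
      · rw [if_neg hy]
        apply Finset.sum_eq_zero; intro b _; rw [if_neg (fun h => hy h.2)]
  set ρ' := ratio G D d' with hρ'
  have hρ'i : ρ' i = ρ i + δ / D i := by
    have h := hrecv i
    rw [if_pos rfl, if_neg him, sub_zero] at h
    simp only [hρ', ratio, h, hρ, add_div]
  have hρ'm : ρ' m = ρ m - δ / D m := by
    have h := hrecv m
    rw [if_neg (show ¬(m = i) from fun h' => him h'.symm), if_pos rfl, add_zero] at h
    simp only [hρ', ratio, h, hρ, sub_div]
  have hρ'other : ∀ y, y ≠ i → y ≠ m → ρ' y = ρ y := by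
    intro y h1 h2
    have h := hrecv y
    rw [if_neg h1, if_neg h2, sub_zero, add_zero] at h
    simp only [hρ', ratio, h, hρ]
  have hii : ρ i < ρ' i := by
    rw [hρ'i]
    have : 0 < δ / D i := div_pos hδpos (hD i)
    linarith
  have him2 : ρ i < ρ' m := by
    rw [hρ'm]
    linarith
  have hne1 : ρ i ≠ ρ m := ne_of_lt hlt
  have hne2 : ρ i ≠ ρ' i := ne_of_lt hii
  have hne3 : ρ i ≠ ρ' m := ne_of_lt him2
  -- decompose univ.val
  have hiu : i ∈ (univ : Finset V).val := Finset.mem_univ_val _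
  have hnd : (univ : Finset V).val.Nodup := univ.nodup
  have hm' : m ∈ (univ : Finset V).val.erase i := by
    rw [hnd.mem_erase_iff]
    exact ⟨fun h => him h.symm, Finset.mem_univ_val _⟩
  set R := (((univ : Finset V).val.erase i).erase m) with hR
  have hdecomp : (univ : Finset V).val = i ::ₘ m ::ₘ R := by
    rw [hR, Multiset.cons_erase hm', Multiset.cons_erase hiu]
  have hyR : ∀ y ∈ R, y ≠ i ∧ y ≠ m := by
    intro y hy
    have h2 := ((hnd.erase i).mem_erase_iff).mp hy
    have h1 := (hnd.mem_erase_iff).mp (Multiset.mem_of_mem_erase hy)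
    exact ⟨h1.1, h2.1⟩
  have hmapR : Multiset.map ρ' R = Multiset.map ρ R :=
    Multiset.map_congr rfl (fun y hy => hρ'other y (hyR y hy).1 (hyR y hy).2)
  set s := Multiset.map ρ (univ : Finset V).val with hs0
  set t := Multiset.map ρ' (univ : Finset V).val with ht0
  have hs : s = ρ i ::ₘ ρ m ::ₘ Multiset.map ρ R := by
    rw [hs0, hdecomp, Multiset.map_cons, Multiset.map_cons]
  have ht : t = ρ' i ::ₘ ρ' m ::ₘ Multiset.map ρ R := by
    rw [ht0, hdecomp, Multiset.map_cons, Multiset.map_cons, hmapR]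
  have hcs : ∀ z, Multiset.count z s
      = Multiset.count z (Multiset.map ρ R) + (if z = ρ i then 1 else 0) + (if z = ρ m then 1 else 0) := by
    intro z
    rw [hs, Multiset.count_cons, Multiset.count_cons]
    omega
  have hct : ∀ z, Multiset.count z t
      = Multiset.count z (Multiset.map ρ R) + (if z = ρ' i then 1 else 0) + (if z = ρ' m then 1 else 0) := by
    intro z
    rw [ht, Multiset.count_cons, Multiset.count_cons]
    omega
  have hLex : List.Lex (· < ·) (sortedRatios G D d) (sortedRatios G D d') := by
    have hcard : Multiset.card s = Multiset.card t := by
      rw [hs0, ht0, Multiset.card_map, Multiset.card_map]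
    have hw : ρ i ∈ s - t := by
      rw [← Multiset.count_pos, Multiset.count_sub, hcs, hct]
      rw [if_pos rfl, if_neg hne1, if_neg hne2, if_neg hne3]
      omega
    have h1 : ∀ z ∈ s - t, ρ i ≤ z := by
      intro z hz
      by_cases hz1 : z = ρ i
      · exact le_of_eq hz1.symm
      by_cases hz2 : z = ρ m
      · rw [hz2]; exact hlt.le
      exfalso
      rw [← Multiset.count_pos, Multiset.count_sub, hcs, hct, if_neg hz1, if_neg hz2] at hz
      omega
    have h2 : ∀ z ∈ t - s, ρ i < z := by
      intro z hz
      by_cases hz1 : z = ρ' i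
      · rw [hz1]; exact hii
      by_cases hz2 : z = ρ' m
      · rw [hz2]; exact him2
      exfalso
      rw [← Multiset.count_pos, Multiset.count_sub, hct, hcs, if_neg hz1, if_neg hz2] at hz
      omega
    exact lex_of_multisets s t hcard (ρ i) hw h1 h2
  exact hopt.2 d' halloc' hLex


lemma nbr_nonempty (halloc : IsAlloc G D d) (hD : ∀ i, 0 < D i) (i : V) :
    (G.neighborFinset i).Nonempty := by
  rw [Finset.nonempty_iff_ne_empty]
  intro h
  have h2 := halloc.2.2 i
  rw [h, Finset.sum_empty] at h2
  exact absurd h2.symm (ne_of_gt (hD i))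

lemma exists_pos_out (halloc : IsAlloc G D d) (hD : ∀ i, 0 < D i) (j : V) :
    ∃ m, G.Adj j m ∧ 0 < d j m := by
  by_contra h
  push_neg at h
  have h0 : ∑ b ∈ G.neighborFinset j, d j b = 0 := by
    apply Finset.sum_eq_zero
    intro b hb
    exact le_antisymm (h b ((SimpleGraph.mem_neighborFinset G j b).mp hb)) (halloc.1 j b)
  rw [halloc.2.2 j] at h0
  exact absurd h0 (ne_of_gt (hD j))

lemma ratio_pos (hD : ∀ i, 0 < D i) (hopt : LexOpt G D d) (i : V) : 0 < ratio G D d i := by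
  have halloc := hopt.1
  rcases (ratio_nonneg G D d hD halloc.1 i).lt_or_eq with h | h
  · exact h
  exfalso
  obtain ⟨j, hj⟩ := nbr_nonempty G D d halloc hD i
  have hij : G.Adj i j := (SimpleGraph.mem_neighborFinset G i j).mp hj
  obtain ⟨m, hjm, hdm⟩ := exists_pos_out G D d halloc hD j
  have hnlt : ¬ (ratio G D d i < ratio G D d m) :=
    fun hl => absurd (rule G D d hD hopt hij.symm hjm hl) (ne_of_gt hdm)
  have hρm : ratio G D d m = 0 :=
    le_antisymm (by rw [h]; exact not_lt.mp hnlt) (ratio_nonneg G D d hD halloc.1 m)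
  have hrm : recv G d m = 0 := by
    rw [recv_eq_ratio_mul G D d hD, hρm, zero_mul]
  have hge : d j m ≤ recv G d m := by
    rw [recv]
    exact Finset.single_le_sum (f := fun b => d b m) (fun b _ => halloc.1 b m)
      ((SimpleGraph.mem_neighborFinset G m j).mpr hjm.symm)
  linarith

lemma flow_le (halloc : IsAlloc G D d) (A B : Finset V)
    (hland : ∀ x ∈ A, ∀ w, d x w ≠ 0 → w ∈ B) :
    ∑ x ∈ A, D x ≤ ∑ w ∈ B, recv G d w := by
  have h1 : ∀ x ∈ A, D x = ∑ w ∈ univ, d x w := by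
    intro x _
    rw [← halloc.2.2 x]
    exact Finset.sum_subset (Finset.subset_univ _) (fun w _ hw =>
      halloc.2.1 x w (fun hadj => hw ((SimpleGraph.mem_neighborFinset G x w).mpr hadj)))
  calc ∑ x ∈ A, D x = ∑ x ∈ A, ∑ w ∈ univ, d x w := Finset.sum_congr rfl h1
    _ = ∑ x ∈ A, ∑ w ∈ B, d x w := by
        refine Finset.sum_congr rfl (fun x hx => ?_)
        exact (Finset.sum_subset (Finset.subset_univ _) (fun w _ hw =>
          by_contra (fun h0 => hw (hland x hx w h0)))).symm
    _ = ∑ w ∈ B, ∑ x ∈ A, d x w := Finset.sum_comm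
    _ ≤ ∑ w ∈ B, recv G d w := by
        refine Finset.sum_le_sum (fun w _ => ?_)
        have h2 : ∑ x ∈ A, d x w ≤ ∑ x ∈ univ, d x w :=
          Finset.sum_le_sum_of_subset_of_nonneg (Finset.subset_univ _)
            (fun x _ _ => halloc.1 x w)
        have h3 : ∑ x ∈ univ, d x w = recv G d w := by
          rw [recv]
          exact (Finset.sum_subset (Finset.subset_univ _) (fun x _ hx =>
            halloc.2.1 x w (fun hadj =>
              hx ((SimpleGraph.mem_neighborFinset G w x).mpr hadj.symm)))).symm
        linarith

lemma prod_ge_one [Nonempty V] (hD : ∀ i, 0 < D i) (hopt : LexOpt G D d) :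
    ∀ j w, G.Adj j w → 1 ≤ ratio G D d j * ratio G D d w := by
  set ρ := ratio G D d with hρ
  have halloc := hopt.1
  have hpos : ∀ i, 0 < ρ i := ratio_pos G D d hD hopt
  have hne : ∀ j : V, ((G.neighborFinset j).image ρ).Nonempty :=
    fun j => (nbr_nonempty G D d halloc hD j).image _
  set σ : V → ℝ := fun j => ((G.neighborFinset j).image ρ).min' (hne j) with hσ
  have hσ_le : ∀ j w, G.Adj j w → σ j ≤ ρ w := fun j w h =>
    Finset.min'_le _ _ (Finset.mem_image_of_mem ρ ((SimpleGraph.mem_neighborFinset G j w).mpr h))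
  have hσ_mem : ∀ j, ∃ v, G.Adj j v ∧ ρ v = σ j := by
    intro j
    have h := Finset.min'_mem _ (hne j)
    rw [Finset.mem_image] at h
    obtain ⟨v, hv, hv2⟩ := h
    exact ⟨v, (SimpleGraph.mem_neighborFinset G j v).mp hv, hv2⟩
  have hσpos : ∀ j, 0 < σ j := by
    intro j
    obtain ⟨v, _, hv⟩ := hσ_mem j
    rw [← hv]; exact hpos v
  have hR1 : ∀ j w, d j w ≠ 0 → ρ w = σ j := by
    intro j w hne0
    have hadj : G.Adj j w := by
      by_contra h
      exact hne0 (halloc.2.1 j w h)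
    refine le_antisymm ?_ (hσ_le j w hadj)
    by_contra hgt
    push_neg at hgt
    obtain ⟨v, hv, hveq⟩ := hσ_mem j
    exact hne0 (rule G D d hD hopt hv hadj (by show ρ v < ρ w; rw [hveq]; exact hgt))
  suffices hφ : ∀ j, 1 ≤ ρ j * σ j by
    intro j w hadj
    have h1 := hσ_le j w hadj
    have h2 := hφ j
    nlinarith [hpos j, hpos w, hσpos j]
  by_contra hco
  push_neg at hco
  obtain ⟨j0, hj0⟩ := hco
  obtain ⟨u, _, hu⟩ := Finset.exists_min_image univ (fun x => ρ x * σ x) univ_nonempty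
  have hu1 : ρ u * σ u < 1 := lt_of_le_of_lt (hu j0 (Finset.mem_univ _)) hj0
  set P := univ.filter (fun x => ρ x = ρ u ∧ σ x = σ u) with hP
  set Q := univ.filter (fun x => ρ x = σ u ∧ σ x = ρ u) with hQ
  have huP : u ∈ P := by simp [hP]
  have hQne : Q.Nonempty := by
    obtain ⟨v, hadj, hv⟩ := hσ_mem u
    refine ⟨v, ?_⟩
    rw [hQ, Finset.mem_filter]
    refine ⟨Finset.mem_univ _, hv, ?_⟩
    have h1 : σ v ≤ ρ u := hσ_le v u hadj.symm
    have h2 : ρ u * σ u ≤ ρ v * σ v := hu v (Finset.mem_univ _)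
    rw [hv] at h2
    have h3 : ρ u ≤ σ v := by nlinarith [hσpos u]
    exact le_antisymm h1 h3
  have landPQ : ∀ x ∈ P, ∀ w, d x w ≠ 0 → w ∈ Q := by
    intro x hx w hne0
    obtain ⟨hρx, hσx⟩ := (Finset.mem_filter.mp hx).2
    have hadjxw : G.Adj x w := by
      by_contra h
      exact hne0 (halloc.2.1 x w h)
    have hρw : ρ w = σ u := by rw [hR1 x w hne0, hσx]
    have hσw_le : σ w ≤ ρ u := by
      have := hσ_le w x hadjxw.symm
      rw [hρx] at this
      exact this
    have hmin : ρ u * σ u ≤ ρ w * σ w := hu w (Finset.mem_univ _)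
    rw [hρw] at hmin
    have h3 : ρ u ≤ σ w := by nlinarith [hσpos u]
    rw [hQ, Finset.mem_filter]
    exact ⟨Finset.mem_univ _, hρw, le_antisymm hσw_le h3⟩
  have landQP : ∀ x ∈ Q, ∀ w, d x w ≠ 0 → w ∈ P := by
    intro x hx w hne0
    obtain ⟨hρx, hσx⟩ := (Finset.mem_filter.mp hx).2
    have hadjxw : G.Adj x w := by
      by_contra h
      exact hne0 (halloc.2.1 x w h)
    have hρw : ρ w = ρ u := by rw [hR1 x w hne0, hσx]
    have hσw_le : σ w ≤ σ u := by
      have := hσ_le w x hadjxw.symm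
      rw [hρx] at this
      exact this
    have hmin : ρ u * σ u ≤ ρ w * σ w := hu w (Finset.mem_univ _)
    rw [hρw] at hmin
    have h3 : σ u ≤ σ w := by nlinarith [hpos u]
    rw [hP, Finset.mem_filter]
    exact ⟨Finset.mem_univ _, hρw, le_antisymm hσw_le h3⟩
  have key1 : ∑ x ∈ P, D x ≤ ∑ w ∈ Q, recv G d w := flow_le G D d halloc P Q landPQ
  have key2 : ∑ x ∈ Q, D x ≤ ∑ w ∈ P, recv G d w := flow_le G D d halloc Q P landQP
  have hrQ : ∑ w ∈ Q, recv G d w = σ u * ∑ w ∈ Q, D w := by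
    rw [Finset.mul_sum]
    refine Finset.sum_congr rfl (fun w hw => ?_)
    rw [recv_eq_ratio_mul G D d hD, ← hρ, ((Finset.mem_filter.mp hw).2).1]
  have hrP : ∑ w ∈ P, recv G d w = ρ u * ∑ w ∈ P, D w := by
    rw [Finset.mul_sum]
    refine Finset.sum_congr rfl (fun w hw => ?_)
    rw [recv_eq_ratio_mul G D d hD, ← hρ, ((Finset.mem_filter.mp hw).2).1]
  have hPpos : 0 < ∑ x ∈ P, D x := Finset.sum_pos (fun x _ => hD x) ⟨u, huP⟩
  have hQpos : 0 < ∑ x ∈ Q, D x := Finset.sum_pos (fun x _ => hD x) hQne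
  rw [hrQ] at key1
  rw [hrP] at key2
  nlinarith [hσpos u, hpos u]

end Main

theorem stmt15 [Fintype V] [Nonempty V] [DecidableEq V] (G : SimpleGraph V) [DecidableRel G.Adj]
    (hconn : G.Connected) (D : V → ℝ) (hD : ∀ i, 0 < D i) (d : V → V → ℝ)
    (hopt : LexOpt G D d) (S : Finset V) :
    ¬ ∃ dhat : V → V → ℝ, AllocOn G D S dhat ∧
      (∀ i ∈ S, recv G d i ≤ recv G dhat i) ∧
      (∃ j ∈ S, recv G d j < recv G dhat j) := by
  rintro ⟨dh, hAll, hge, j0, hj0S, hj0⟩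
  have halloc := hopt.1
  set ρ := ratio G D d with hρ
  have hpos : ∀ i, 0 < ρ i := ratio_pos G D d hD hopt
  have hE := prod_ge_one G D d hD hopt
  set g : V → ℝ := fun i => 1 / (1 + ρ i) with hg
  have hgpos : ∀ i, 0 < g i := fun i => div_pos one_pos (by linarith [hpos i])
  have hkey : ∀ j i, G.Adj j i → g i ≤ ρ j * g j := by
    intro j i hadj
    have hEji := hE j i hadj
    have h1 : (0:ℝ) < 1 + ρ i := by linarith [hpos i]
    have h2 : (0:ℝ) < 1 + ρ j := by linarith [hpos j]
    have h3 : (1:ℝ)/(1 + ρ i) ≤ ρ j/(1 + ρ j) := by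
      rw [div_le_div_iff₀ h1 h2]
      nlinarith
    calc g i = 1/(1 + ρ i) := rfl
      _ ≤ ρ j/(1 + ρ j) := h3
      _ = ρ j * g j := by rw [hg]; ring
  have hrecvdh : ∀ i, recv G dh i = ∑ j ∈ univ, dh j i := by
    intro i
    rw [recv]
    exact Finset.sum_subset (Finset.subset_univ _) (fun j _ hj =>
      hAll.2.1 j i (fun h => hj ((SimpleGraph.mem_neighborFinset G i j).mpr h.2.2.symm)))
  have hPhihat : ∑ i ∈ S, g i * recv G dh i = ∑ j ∈ S, ∑ i ∈ S, g i * dh j i := by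
    calc ∑ i ∈ S, g i * recv G dh i = ∑ i ∈ S, ∑ j ∈ univ, g i * dh j i := by
          refine Finset.sum_congr rfl (fun i _ => ?_)
          rw [hrecvdh i, Finset.mul_sum]
      _ = ∑ j ∈ univ, ∑ i ∈ S, g i * dh j i := Finset.sum_comm
      _ = ∑ j ∈ S, ∑ i ∈ S, g i * dh j i := by
          symm
          refine Finset.sum_subset (Finset.subset_univ S) (fun j _ hjS => ?_)
          refine Finset.sum_eq_zero (fun i _ => ?_)
          rw [hAll.2.1 j i (fun h => hjS h.1), mul_zero]
  have hperj : ∀ j ∈ S, ∑ i ∈ S, g i * dh j i ≤ ρ j * g j * D j := by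
    intro j hjS
    have hb : ∀ i ∈ S, g i * dh j i ≤ (ρ j * g j) * dh j i := by
      intro i _
      by_cases h0 : dh j i = 0
      · rw [h0, mul_zero, mul_zero]
      · have hcond : j ∈ S ∧ i ∈ S ∧ G.Adj j i := by
          by_contra hc
          exact h0 (hAll.2.1 j i hc)
        have hk := hkey j i hcond.2.2
        have hdh0 : 0 ≤ dh j i := hAll.1 j i
        nlinarith
    have hsle : ∑ i ∈ S, dh j i ≤ D j := by
      have hshrink : ∑ i ∈ S, dh j i = ∑ i ∈ G.neighborFinset j ∩ S, dh j i := by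
        symm
        refine Finset.sum_subset Finset.inter_subset_right (fun i hiS hni => ?_)
        refine hAll.2.1 j i ?_
        rintro ⟨_, hiS', hadj⟩
        exact hni (Finset.mem_inter.mpr ⟨(SimpleGraph.mem_neighborFinset G j i).mpr hadj, hiS'⟩)
      rw [hshrink]
      by_cases hne : (G.neighborFinset j ∩ S).Nonempty
      · rw [hAll.2.2 j hjS hne]
      · rw [Finset.not_nonempty_iff_eq_empty.mp hne, Finset.sum_empty]
        exact (hD j).le
    have hρg : 0 ≤ ρ j * g j := le_of_lt (mul_pos (hpos j) (hgpos j))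
    calc ∑ i ∈ S, g i * dh j i ≤ ∑ i ∈ S, (ρ j * g j) * dh j i := Finset.sum_le_sum hb
      _ = (ρ j * g j) * ∑ i ∈ S, dh j i := by rw [Finset.mul_sum]
      _ ≤ (ρ j * g j) * D j := mul_le_mul_of_nonneg_left hsle hρg
      _ = ρ j * g j * D j := by ring
  have hstep1 : ∑ i ∈ S, g i * recv G dh i ≤ ∑ j ∈ S, g j * recv G d j := by
    rw [hPhihat]
    calc ∑ j ∈ S, ∑ i ∈ S, g i * dh j i ≤ ∑ j ∈ S, ρ j * g j * D j :=
          Finset.sum_le_sum hperj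
      _ = ∑ j ∈ S, g j * recv G d j := by
          refine Finset.sum_congr rfl (fun j _ => ?_)
          rw [recv_eq_ratio_mul G D d hD, ← hρ]
          ring
  have hstep2 : ∑ j ∈ S, g j * recv G d j < ∑ i ∈ S, g i * recv G dh i := by
    refine Finset.sum_lt_sum (fun i hiS => mul_le_mul_of_nonneg_left (hge i hiS) (hgpos i).le)
      ⟨j0, hj0S, ?_⟩
    exact mul_lt_mul_of_pos_left hj0 (hgpos j0)
  linarith

end
end

section
/- If an allocation d satisfies, for every node i: (a) d_ji = ρ_i · d_ij for all neighbors j of i (where ρ_i = r_i/D_i), and (b) every neighbor j of i with d_ij = 0 has ρ_j ≥ 1/ρ_i, then d is lexicographically optimal. -/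
open Finset

noncomputable section

variable {V : Type*}

lemma lex_cancel {α : Type*} [LinearOrder α] :
    ∀ (c l l' : List α), List.Lex (· < ·) (c ++ l) (c ++ l') → List.Lex (· < ·) l l' := by
  intro c
  induction c with
  | nil => intro l l' h; exact h
  | cons x c ih =>
    intro l l' h
    cases h with
    | rel h => exact absurd h (lt_irrefl x)
    | cons h => exact ih l l' h

lemma sorted_replicate (n : ℕ) (a : ℝ) : List.Pairwise (· ≤ ·) (List.replicate n a) := by
  induction n with
  | zero => simp
  | succ n ih =>
    rw [List.replicate_succ, List.pairwise_cons]
    exact ⟨fun b hb => le_of_eq (List.eq_of_mem_replicate hb).symm, ih⟩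

lemma sort_split {V : Type*} [DecidableEq V] (S S₀ : Finset V) (hsub : S₀ ⊆ S)
    (f : V → ℝ) (a : ℝ) (hmin : ∀ i ∈ S, a ≤ f i) (h0 : ∀ i ∈ S₀, f i = a) :
    (S.val.map f).sort (· ≤ ·) =
      List.replicate S₀.card a ++ ((S \ S₀).val.map f).sort (· ≤ ·) := by
  refine (fun hp h1 h2 => List.Perm.eq_of_pairwise' h1 h2 hp) ?_ (Multiset.pairwise_sort _ _) ?_
  · rw [← Multiset.coe_eq_coe, Multiset.sort_eq,
      show ((List.replicate S₀.card a ++ Multiset.sort ((S \ S₀).val.map f) (· ≤ ·) : List ℝ) : Multiset ℝ)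
        = (List.replicate S₀.card a : Multiset ℝ) + ((S \ S₀).val.map f) from by
          rw [show ((List.replicate S₀.card a ++ Multiset.sort ((S \ S₀).val.map f) (· ≤ ·) : List ℝ) : Multiset ℝ)
            = (List.replicate S₀.card a : Multiset ℝ) + (Multiset.sort ((S \ S₀).val.map f) (· ≤ ·) : Multiset ℝ) from rfl,
            Multiset.sort_eq]]
    rw [Multiset.coe_replicate]
    have h1 : (S₀.val.map f) = Multiset.replicate S₀.card a := by
      rw [Multiset.eq_replicate]
      refine ⟨by simp, fun b hb => ?_⟩
      rcases Multiset.mem_map.mp hb with ⟨i, hi, rfl⟩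
      exact h0 i hi
    have h2 : S₀.val + (S \ S₀).val = S.val := by
      rw [Finset.sdiff_val]
      exact add_tsub_cancel_of_le (Finset.val_le_iff.mpr hsub)
    rw [← h1, ← Multiset.map_add, h2]
  · rw [List.pairwise_append]
    refine ⟨sorted_replicate _ _, Multiset.pairwise_sort _ _, ?_⟩
    intro x hx y hy
    rw [List.eq_of_mem_replicate hx]
    have : y ∈ ((S \ S₀).val.map f) := by
      rw [← Multiset.sort_eq ((S \ S₀).val.map f) (· ≤ ·)]; exact_mod_cast hy
    rcases Multiset.mem_map.mp this with ⟨i, hi, rfl⟩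
    exact hmin i (Finset.mem_sdiff.mp (by exact_mod_cast hi)).1

lemma key_lemma {V : Type*} [DecidableEq V] (w ρ ρ' : V → ℝ) (hw : ∀ i, 0 < w i) :
    ∀ S : Finset V,
    (∀ t : ℝ, ∑ i ∈ S.filter (fun i => ρ i ≤ t), w i * ρ' i
        ≤ ∑ i ∈ S.filter (fun i => ρ i ≤ t), w i * ρ i) →
    ¬ List.Lex (· < ·) ((S.val.map ρ).sort (· ≤ ·)) ((S.val.map ρ').sort (· ≤ ·)) := by
  intro S
  induction S using Finset.strongInductionOn with
  | _ S ih =>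
  intro hM hlex
  rcases S.eq_empty_or_nonempty with rfl | hS
  · simp at hlex
  -- a is the minimum of ρ on S
  set a := S.inf' hS ρ with ha
  have ha_le : ∀ i ∈ S, a ≤ ρ i := fun i hi => Finset.inf'_le ρ hi
  set S₀ := S.filter (fun i => ρ i = a) with hS₀
  have hS₀sub : S₀ ⊆ S := Finset.filter_subset _ _
  have hS₀ne : S₀.Nonempty := by
    obtain ⟨i, hi, hie⟩ := Finset.exists_mem_eq_inf' hS ρ
    exact ⟨i, Finset.mem_filter.mpr ⟨hi, hie.symm⟩⟩
  have hfa : S.filter (fun i => ρ i ≤ a) = S₀ := by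
    ext i
    simp only [Finset.mem_filter, hS₀]
    exact ⟨fun ⟨h1, h2⟩ => ⟨h1, le_antisymm h2 (ha_le i h1)⟩, fun ⟨h1, h2⟩ => ⟨h1, le_of_eq h2⟩⟩
  have h₀ : ∑ i ∈ S₀, w i * ρ' i ≤ ∑ i ∈ S₀, w i * ρ i := by
    have := hM a; rwa [hfa] at this
  by_cases hcase : ∀ i ∈ S, a ≤ ρ' i
  · -- all ρ' ≥ a, so ρ' = a on S₀
    have hρ'a : ∀ i ∈ S₀, ρ' i = a := by
      have hsum0 : ∑ i ∈ S₀, w i * (ρ' i - a) = 0 := by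
        apply le_antisymm
        · have hc : ∑ i ∈ S₀, w i * ρ i = ∑ i ∈ S₀, w i * a :=
            Finset.sum_congr rfl (fun i hi => by rw [(Finset.mem_filter.mp hi).2])
          have he : ∑ i ∈ S₀, w i * (ρ' i - a)
              = ∑ i ∈ S₀, w i * ρ' i - ∑ i ∈ S₀, w i * a := by
            rw [← Finset.sum_sub_distrib]
            exact Finset.sum_congr rfl (fun i _ => by ring)
          linarith
        · apply Finset.sum_nonneg
          intro i hi
          exact mul_nonneg (hw i).le (sub_nonneg.mpr (hcase i (hS₀sub hi)))
      intro i hi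
      have := (Finset.sum_eq_zero_iff_of_nonneg (fun i hi =>
        mul_nonneg (hw i).le (sub_nonneg.mpr (hcase i (hS₀sub hi))))).mp hsum0 i hi
      have hwi := (hw i).ne'
      have : ρ' i - a = 0 := by
        rcases mul_eq_zero.mp this with h | h
        · exact absurd h hwi
        · exact h
      linarith
    -- split both sorted lists
    have hsplit1 := sort_split S S₀ hS₀sub ρ a ha_le (fun i hi => (Finset.mem_filter.mp hi).2)
    have hsplit2 := sort_split S S₀ hS₀sub ρ' a hcase hρ'a
    rw [hsplit1, hsplit2] at hlex
    have hlex' := lex_cancel _ _ _ hlex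
    -- apply IH to S \ S₀
    refine ih (S \ S₀) (Finset.sdiff_ssubset hS₀sub hS₀ne) ?_ hlex'
    intro t
    by_cases ht : a ≤ t
    · have hunion : ∀ g : V → ℝ,
          ∑ i ∈ S.filter (fun i => ρ i ≤ t), g i
            = ∑ i ∈ S₀, g i + ∑ i ∈ (S \ S₀).filter (fun i => ρ i ≤ t), g i := by
        intro g
        rw [← Finset.sum_union]
        · congr 1
          ext i
          simp only [Finset.mem_filter, Finset.mem_union, Finset.mem_sdiff, hS₀]
          constructor
          · rintro ⟨h1, h2⟩
            by_cases hia : ρ i = a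
            · exact Or.inl ⟨h1, hia⟩
            · exact Or.inr ⟨⟨h1, fun hc => hia hc.2⟩, h2⟩
          · rintro (⟨h1, h2⟩ | ⟨⟨h1, _⟩, h2⟩)
            · exact ⟨h1, h2 ▸ ht⟩
            · exact ⟨h1, h2⟩
        · rw [Finset.disjoint_left]
          intro i hi hc
          exact (Finset.mem_sdiff.mp (Finset.mem_filter.mp hc).1).2 hi
      have heq : ∑ i ∈ S₀, w i * ρ' i = ∑ i ∈ S₀, w i * ρ i := by
        apply Finset.sum_congr rfl
        intro i hi
        rw [hρ'a i hi, (Finset.mem_filter.mp hi).2]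
      have := hM t
      rw [hunion (fun i => w i * ρ' i), hunion (fun i => w i * ρ i)] at this
      linarith
    · have : (S \ S₀).filter (fun i => ρ i ≤ t) = ∅ := by
        apply Finset.filter_eq_empty_iff.mpr
        intro i hi hc
        exact ht (le_trans (ha_le i (Finset.mem_sdiff.mp hi).1) hc)
      rw [this]; simp
  · -- some ρ' < a : the sorted ρ' list starts below a
    push_neg at hcase
    obtain ⟨i₀, hi₀S, hi₀⟩ := hcase
    set s := (S.val.map ρ).sort (· ≤ ·) with hs
    set s' := (S.val.map ρ').sort (· ≤ ·) with hs'
    have hsne : s ≠ [] := by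
      intro h
      have : (S.val.map ρ) = 0 := by rw [← Multiset.sort_eq (S.val.map ρ) (· ≤ ·), ← hs, h]; rfl
      simp at this
      exact hS.ne_empty (by ext i; simp [Finset.eq_empty_iff_forall_notMem] at this ⊢; exact this i)
    have hs'ne : s' ≠ [] := by
      intro h
      have : (S.val.map ρ') = 0 := by rw [← Multiset.sort_eq (S.val.map ρ') (· ≤ ·), ← hs', h]; rfl
      simp at this
      exact hS.ne_empty (by ext i; simp [Finset.eq_empty_iff_forall_notMem] at this ⊢; exact this i)
    obtain ⟨x, xs, hx⟩ := List.exists_cons_of_ne_nil hsne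
    obtain ⟨y, ys, hy⟩ := List.exists_cons_of_ne_nil hs'ne
    have hax : a ≤ x := by
      have hxmem : x ∈ (S.val.map ρ) := by
        rw [← Multiset.sort_eq (S.val.map ρ) (· ≤ ·), ← hs, hx]
        exact List.mem_cons_self
      rcases Multiset.mem_map.mp hxmem with ⟨i, hi, rfl⟩
      exact ha_le i hi
    have hya : y < a := by
      have hmem : ρ' i₀ ∈ s' := by
        rw [hs', Multiset.mem_sort]
        exact Multiset.mem_map_of_mem ρ' hi₀S
      have hsorted : List.Pairwise (· ≤ ·) s' := Multiset.pairwise_sort _ _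
      rw [hy] at hmem hsorted
      rcases List.mem_cons.mp hmem with h | h
      · rw [← h]; exact hi₀
      · exact lt_of_le_of_lt ((List.pairwise_cons.mp hsorted).1 _ h) hi₀
    rw [hx, hy] at hlex
    cases hlex with
    | rel h => linarith
    | cons h => linarith

theorem stmt17 [Fintype V] [Nonempty V] [DecidableEq V] (G : SimpleGraph V) [DecidableRel G.Adj]
    (hconn : G.Connected) (D : V → ℝ) (hD : ∀ i, 0 < D i) (d : V → V → ℝ)
    (hd : IsAlloc G D d)
    (hprop : ∀ i j, G.Adj i j → d j i = ratio G D d i * d i j)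
    (hzero : ∀ i j, G.Adj i j → d i j = 0 → 1 / ratio G D d i ≤ ratio G D d j) :
    LexOpt G D d := by
  refine ⟨hd, ?_⟩
  intro d' hd'
  obtain ⟨hd0, hdsupp, hdsum⟩ := hd
  obtain ⟨hd'0, hd'supp, hd'sum⟩ := hd'
  set ρ := ratio G D d with hρdef
  set ρ' := ratio G D d' with hρ'def
  -- positivity of ratios of d
  have hrecv_nonneg : ∀ i, 0 ≤ recv G d i := by
    intro i
    show 0 ≤ ∑ j ∈ G.neighborFinset i, d j i
    exact Finset.sum_nonneg (fun j _ => hd0 j i)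
  have hρpos : ∀ i, 0 < ρ i := by
    intro i
    have hri : ρ i = recv G d i / D i := rfl
    rw [hri]
    apply div_pos ?_ (hD i)
    rcases (hrecv_nonneg i).lt_or_eq with h | h
    · exact h
    exfalso
    have hz : ∀ j ∈ G.neighborFinset i, d j i = 0 := by
      have h0 : ∑ j ∈ G.neighborFinset i, d j i = 0 := h.symm
      exact fun j hj => (Finset.sum_eq_zero_iff_of_nonneg (fun j _ => hd0 j i)).mp h0 j hj
    have hsum : ∑ j ∈ G.neighborFinset i, d i j = 0 := by
      apply Finset.sum_eq_zero
      intro j hj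
      have hadj : G.Adj i j := (SimpleGraph.mem_neighborFinset _ _ _).mp hj
      have h2 := hprop j i hadj.symm
      rw [h2, hz j hj, mul_zero]
    rw [hdsum i] at hsum
    exact (hD i).ne' hsum
  -- edge facts
  have hposedge : ∀ i j, G.Adj i j → 0 < d i j → ρ i * ρ j = 1 := by
    intro i j hadj hpos
    have h1 := hprop i j hadj
    have h2 := hprop j i hadj.symm
    rw [h1] at h2
    have h3 : (ρ i * ρ j - 1) * d i j = 0 := by nlinarith [h2]
    rcases mul_eq_zero.mp h3 with h | h
    · linarith
    · exact absurd h hpos.ne'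
  have hedge : ∀ i j, G.Adj i j → 1 ≤ ρ i * ρ j := by
    intro i j hadj
    rcases (hd0 i j).lt_or_eq with h | h
    · exact (hposedge i j hadj h).ge
    · have h1 := hzero i j hadj h.symm
      rw [div_le_iff₀ (hρpos i)] at h1
      rw [mul_comm]
      linarith
  -- support lemmas
  have hrecv_univ : ∀ (e : V → V → ℝ), (∀ i j, ¬ G.Adj i j → e i j = 0) →
      ∀ i, recv G e i = ∑ j, e j i := by
    intro e hsupp i
    show ∑ j ∈ G.neighborFinset i, e j i = ∑ j, e j i
    apply Finset.sum_subset (Finset.subset_univ _)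
    intro j _ hj
    exact hsupp j i (fun h => hj ((SimpleGraph.mem_neighborFinset _ _ _).mpr h.symm))
  have hsum_out : ∀ (e : V → V → ℝ), (∀ i j, ¬ G.Adj i j → e i j = 0) →
      (∀ i, ∑ j ∈ G.neighborFinset i, e i j = D i) → ∀ j, ∑ i, e j i = D j := by
    intro e hsupp hesum j
    rw [← hesum j]
    symm
    apply Finset.sum_subset (Finset.subset_univ _)
    intro i _ hi
    exact hsupp j i (fun h => hi ((SimpleGraph.mem_neighborFinset _ _ _).mpr h))
  -- the master inequality
  have hM : ∀ t : ℝ, ∑ i ∈ univ.filter (fun i => ρ i ≤ t), D i * ρ' i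
      ≤ ∑ i ∈ univ.filter (fun i => ρ i ≤ t), D i * ρ i := by
    intro t
    have hDρ : ∀ (e : V → V → ℝ) (i : V), D i * ratio G D e i = recv G e i := by
      intro e i
      have : ratio G D e i = recv G e i / D i := rfl
      rw [this, mul_comm]
      exact div_mul_cancel₀ _ (hD i).ne' 
    rw [Finset.sum_congr rfl (fun i _ => hDρ d' i), Finset.sum_congr rfl (fun i _ => hDρ d i)]
    by_cases ht : 0 < t
    swap
    · have hempty : univ.filter (fun i => ρ i ≤ t) = ∅ := by
        apply Finset.filter_eq_empty_iff.mpr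
        intro i _
        push_neg
        linarith [hρpos i, not_lt.mp ht]
      rw [hempty]
      simp
    set P := univ.filter (fun i => ρ i ≤ t) with hP
    set T := univ.filter (fun j => ∃ i ∈ P, G.Adj j i) with hT
    have hrecvP : ∀ (e : V → V → ℝ), (∀ i j, ¬ G.Adj i j → e i j = 0) →
        ∑ i ∈ P, recv G e i = ∑ j ∈ T, ∑ i ∈ P, e j i := by
      intro e hsupp
      rw [Finset.sum_congr rfl (fun i (_ : i ∈ P) => hrecv_univ e hsupp i), Finset.sum_comm]
      symm
      apply Finset.sum_subset (Finset.subset_univ _)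
      intro j _ hj
      apply Finset.sum_eq_zero
      intro i hiP
      refine hsupp j i (fun hadj => hj ?_)
      exact Finset.mem_filter.mpr ⟨Finset.mem_univ _, ⟨i, hiP, hadj⟩⟩
    rw [hrecvP d hdsupp, hrecvP d' hd'supp]
    apply Finset.sum_le_sum
    intro j hj
    have hTρ : 1 ≤ ρ j * t := by
      obtain ⟨i, hiP, hadj⟩ := (Finset.mem_filter.mp hj).2
      have h1 := hedge j i hadj
      have h2 : ρ i ≤ t := (Finset.mem_filter.mp hiP).2
      nlinarith [hρpos i, hρpos j]
    have hub : ∑ i ∈ P, d' j i ≤ D j := by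
      rw [← hsum_out d' hd'supp hd'sum j]
      exact Finset.sum_le_sum_of_subset_of_nonneg (Finset.subset_univ _)
        (fun i _ _ => hd'0 j i)
    have heq : ∑ i ∈ P, d j i = D j := by
      rw [← hsum_out d hdsupp hdsum j]
      apply Finset.sum_subset (Finset.subset_univ _)
      intro i _ hiP
      by_contra hne
      have hdpos : 0 < d j i := (hd0 j i).lt_of_ne (Ne.symm hne)
      have hadj : G.Adj j i := by
        by_contra hna
        exact hne (hdsupp j i hna)
      have h1 : ρ j * ρ i = 1 := hposedge j i hadj hdpos
      have h3 : t < ρ i := by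
        have : ¬ (ρ i ≤ t) := fun hc => hiP (Finset.mem_filter.mpr ⟨Finset.mem_univ _, hc⟩)
        linarith [not_le.mp this]
      nlinarith [hρpos j, hρpos i]
    linarith
  exact key_lemma D ρ ρ' hD univ hM
end
end

section
/- In a complete graph, any lex-optimal allocation has at most two distinct exchange ratio levels; moreover, if there are exactly two levels, the minimum-ratio level set is a singleton. -/
open Finset

noncomputable section

variable {V : Type*}

private lemma sort_cons_min (x : ℝ) (s : Multiset ℝ) (h : ∀ y ∈ s, x ≤ y) :
    (x ::ₘ s).sort (· ≤ ·) = x :: s.sort (· ≤ ·) := by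
  have h1 : ((x ::ₘ s).sort (· ≤ ·)).Perm (x :: s.sort (· ≤ ·)) := by
    rw [← Multiset.coe_eq_coe]
    simp [Multiset.sort_eq]
    rw [← Multiset.cons_coe, Multiset.sort_eq]
  have h2 : List.Pairwise (· ≤ ·) ((x ::ₘ s).sort (· ≤ ·)) := Multiset.pairwise_sort _ _
  have h3 : List.Pairwise (· ≤ ·) (x :: s.sort (· ≤ ·)) := by
    refine List.pairwise_cons.2 ⟨?_, Multiset.pairwise_sort _ _⟩
    intro b hb
    exact h b (by rwa [← Multiset.mem_sort (α := ℝ) (· ≤ ·)])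
  exact h1.eq_of_pairwise' h2 h3

private lemma lexM (A : Multiset ℝ) : ∀ a b a' b' : ℝ, a < a' → a < b → a < b' →
    List.Lex (· < ·) ((a ::ₘ b ::ₘ A).sort (· ≤ ·)) ((a' ::ₘ b' ::ₘ A).sort (· ≤ ·)) := by
  induction A using Multiset.strongInductionOn with
  | ih A IH =>
    intro a b a' b' haa' hab hab'
    rcases hs : A.sort (· ≤ ·) with _ | ⟨c, t⟩
    · have hA : A = 0 := by
        have := Multiset.sort_eq A (· ≤ ·)
        rw [hs] at this
        simpa using this.symm
      subst hA
      have hL : (a ::ₘ b ::ₘ (0:Multiset ℝ)).sort (· ≤ ·) = a :: [b] := by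
        rw [sort_cons_min a _ (by intro y hy; simp at hy; subst hy; exact hab.le)]
        simp
      rw [hL]
      rcases hY : (a' ::ₘ b' ::ₘ (0:Multiset ℝ)).sort (· ≤ ·) with _ | ⟨h, t'⟩
      · exfalso
        have := Multiset.sort_eq (a' ::ₘ b' ::ₘ (0:Multiset ℝ)) (· ≤ ·)
        rw [hY] at this
        simp at this
      · have hh : h ∈ a' ::ₘ b' ::ₘ (0:Multiset ℝ) := by
          rw [← Multiset.mem_sort (α := ℝ) (· ≤ ·), hY]; simp
        have : a < h := by
          simp at hh; rcases hh with rfl | rfl <;> assumption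
        exact List.Lex.rel this
    · have hsorted := Multiset.pairwise_sort A (· ≤ ·)
      rw [hs] at hsorted
      have hct : ∀ y ∈ (t : Multiset ℝ), c ≤ y := by
        intro y hy
        exact (List.pairwise_cons.1 hsorted).1 y (by simpa using hy)
      have hA : A = c ::ₘ (t : Multiset ℝ) := by
        have := Multiset.sort_eq A (· ≤ ·)
        rw [hs] at this
        exact this.symm
      have hAmem : ∀ y ∈ A, c ≤ y := by
        intro y hy; rw [hA] at hy
        rcases Multiset.mem_cons.1 hy with rfl | hy
        · exact le_refl y
        · exact hct y hy
      rcases le_or_gt c a with hca | hac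
      · have e1 : a ::ₘ b ::ₘ A = c ::ₘ a ::ₘ b ::ₘ (t : Multiset ℝ) := by
          rw [hA, Multiset.cons_swap b c, Multiset.cons_swap a c]
        have e2 : a' ::ₘ b' ::ₘ A = c ::ₘ a' ::ₘ b' ::ₘ (t : Multiset ℝ) := by
          rw [hA, Multiset.cons_swap b' c, Multiset.cons_swap a' c]
        have m1 : ∀ y ∈ a ::ₘ b ::ₘ (t : Multiset ℝ), c ≤ y := by
          intro y hy; simp at hy
          rcases hy with rfl | rfl | hy
          · exact hca
          · exact hca.trans hab.le
          · exact hct y hy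
        have m2 : ∀ y ∈ a' ::ₘ b' ::ₘ (t : Multiset ℝ), c ≤ y := by
          intro y hy; simp at hy
          rcases hy with rfl | rfl | hy
          · exact hca.trans haa'.le
          · exact hca.trans hab'.le
          · exact hct y hy
        rw [e1, e2, sort_cons_min c _ m1, sort_cons_min c _ m2]
        exact List.Lex.cons (IH _ (hA ▸ Multiset.lt_cons_self _ _) a b a' b' haa' hab hab')
      · have hL : (a ::ₘ b ::ₘ A).sort (· ≤ ·) = a :: ((b ::ₘ A).sort (· ≤ ·)) := by
          apply sort_cons_min
          intro y hy
          rcases Multiset.mem_cons.1 hy with rfl | hy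
          · exact hab.le
          · exact (hac.trans_le (hAmem y hy)).le
        rw [hL]
        rcases hY : (a' ::ₘ b' ::ₘ A).sort (· ≤ ·) with _ | ⟨h, t'⟩
        · exfalso
          have := Multiset.sort_eq (a' ::ₘ b' ::ₘ A) (· ≤ ·)
          rw [hY] at this
          simp at this
        · have hh : h ∈ a' ::ₘ b' ::ₘ A := by
            rw [← Multiset.mem_sort (α := ℝ) (· ≤ ·), hY]; simp
          have : a < h := by
            rcases Multiset.mem_cons.1 hh with rfl | hh
            · exact haa'
            · rcases Multiset.mem_cons.1 hh with rfl | hh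
              · exact hab'
              · exact hac.trans_le (hAmem h hh)
          exact List.Lex.rel this

private lemma key [Fintype V] [DecidableEq V] (G : SimpleGraph V) [DecidableRel G.Adj]
    (hcomp : ∀ i j : V, i ≠ j → G.Adj i j) (D : V → ℝ) (hD : ∀ i, 0 < D i)
    (d : V → V → ℝ) (hopt : LexOpt G D d)
    (i j k : V) (hij : ratio G D d i < ratio G D d j) (hki : k ≠ i) (hkj : k ≠ j) :
    d k j = 0 := by
  by_contra hpos0
  obtain ⟨⟨hnn, hsupp, hsum⟩, hbest⟩ := hopt
  set ρ : V → ℝ := ratio G D d with hρ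
  have hij' : i ≠ j := by rintro rfl; exact lt_irrefl _ hij
  have hpos : 0 < d k j := lt_of_le_of_ne (hnn k j) (Ne.symm hpos0)
  have hnb : ∀ x : V, G.neighborFinset x = Finset.univ.erase x := by
    intro x; ext y
    simp only [SimpleGraph.mem_neighborFinset, Finset.mem_erase, Finset.mem_univ, and_true]
    constructor
    · intro h; exact (G.ne_of_adj h).symm
    · intro h; exact hcomp x y (Ne.symm h)
  set ε : ℝ := min (d k j) ((ρ j - ρ i) * D j / 2) with hε
  have hεpos : 0 < ε :=
    lt_min hpos (div_pos (mul_pos (sub_pos.2 hij) (hD j)) two_pos)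
  have hεdkj : ε ≤ d k j := min_le_left _ _
  have hεb : ε / D j < ρ j - ρ i := by
    rw [div_lt_iff₀ (hD j)]
    calc ε ≤ (ρ j - ρ i) * D j / 2 := min_le_right _ _
      _ < (ρ j - ρ i) * D j := half_lt_self (mul_pos (sub_pos.2 hij) (hD j))
  set d' : V → V → ℝ := fun x y =>
    d x y + (if x = k ∧ y = i then ε else 0) - (if x = k ∧ y = j then ε else 0) with hd'
  have hmemk : ∀ m : V, m ≠ k → k ∈ G.neighborFinset m := by
    intro m hm; rw [hnb]; exact Finset.mem_erase.2 ⟨Ne.symm hm, Finset.mem_univ k⟩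
  have halloc' : IsAlloc G D d' := by
    refine ⟨?_, ?_, ?_⟩
    · intro x y
      simp only [hd']
      split_ifs with h1 h2 h2
      · exact absurd (h1.2.symm.trans h2.2) hij'
      · have := hnn x y; linarith
      · obtain ⟨rfl, rfl⟩ := h2
        linarith
      · have := hnn x y; linarith
    · intro x y hadj
      have h1 : ¬(x = k ∧ y = i) := by rintro ⟨rfl, rfl⟩; exact hadj (hcomp _ _ hki)
      have h2 : ¬(x = k ∧ y = j) := by rintro ⟨rfl, rfl⟩; exact hadj (hcomp _ _ hkj)
      simp only [hd', if_neg h1, if_neg h2, hsupp x y hadj]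
      ring
    · intro x
      have hsplit : ∑ y ∈ G.neighborFinset x, d' x y
          = ∑ y ∈ G.neighborFinset x, d x y
            + ∑ y ∈ G.neighborFinset x, (if x = k ∧ y = i then ε else 0)
            - ∑ y ∈ G.neighborFinset x, (if x = k ∧ y = j then ε else 0) := by
        rw [← Finset.sum_add_distrib, ← Finset.sum_sub_distrib]
      rw [hsplit, hsum]
      by_cases hxk : x = k
      · subst hxk
        have e1 : ∑ y ∈ G.neighborFinset x, (if x = x ∧ y = i then ε else 0) = ε := by
          simp only [eq_self_iff_true, true_and]
          rw [Finset.sum_ite_eq' (G.neighborFinset x) i (fun _ => ε)]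
          rw [if_pos]
          rw [hnb]; exact Finset.mem_erase.2 ⟨hki.symm, Finset.mem_univ i⟩
        have e2 : ∑ y ∈ G.neighborFinset x, (if x = x ∧ y = j then ε else 0) = ε := by
          simp only [eq_self_iff_true, true_and]
          rw [Finset.sum_ite_eq' (G.neighborFinset x) j (fun _ => ε)]
          rw [if_pos]
          rw [hnb]; exact Finset.mem_erase.2 ⟨hkj.symm, Finset.mem_univ j⟩
        rw [e1, e2]; ring
      · have e1 : ∑ y ∈ G.neighborFinset x, (if x = k ∧ y = i then ε else 0) = 0 := by
          apply Finset.sum_eq_zero; intro y _; simp [hxk]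
        have e2 : ∑ y ∈ G.neighborFinset x, (if x = k ∧ y = j then ε else 0) = 0 := by
          apply Finset.sum_eq_zero; intro y _; simp [hxk]
        rw [e1, e2]; ring
  have hrecv : ∀ m, recv G d' m
      = recv G d m + (if m = i then ε else 0) - (if m = j then ε else 0) := by
    intro m
    show ∑ x ∈ G.neighborFinset m, d' x m = _
    have hsplit : ∑ x ∈ G.neighborFinset m, d' x m
        = ∑ x ∈ G.neighborFinset m, d x m
          + ∑ x ∈ G.neighborFinset m, (if x = k ∧ m = i then ε else 0)
          - ∑ x ∈ G.neighborFinset m, (if x = k ∧ m = j then ε else 0) := by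
      rw [← Finset.sum_add_distrib, ← Finset.sum_sub_distrib]
    rw [hsplit]
    have e1 : ∑ x ∈ G.neighborFinset m, (if x = k ∧ m = i then ε else 0)
        = if m = i then ε else 0 := by
      by_cases hmi : m = i
      · subst hmi
        rw [if_pos rfl]
        simp only [eq_self_iff_true, and_true]
        rw [Finset.sum_ite_eq' (G.neighborFinset m) k (fun _ => ε), if_pos (hmemk m (Ne.symm hki))]
      · simp [hmi]
    have e2 : ∑ x ∈ G.neighborFinset m, (if x = k ∧ m = j then ε else 0)
        = if m = j then ε else 0 := by
      by_cases hmj : m = j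
      · subst hmj
        rw [if_pos rfl]
        simp only [eq_self_iff_true, and_true]
        rw [Finset.sum_ite_eq' (G.neighborFinset m) k (fun _ => ε), if_pos (hmemk m (Ne.symm hkj))]
      · simp [hmj]
    rw [e1, e2]
    rfl
  have hρi : ratio G D d' i = ρ i + ε / D i := by
    show recv G d' i / D i = _
    rw [hrecv i, if_pos rfl, if_neg hij']
    show (recv G d i + ε - 0) / D i = recv G d i / D i + ε / D i
    rw [sub_zero, add_div]
  have hρj : ratio G D d' j = ρ j - ε / D j := by
    show recv G d' j / D j = _
    rw [hrecv j, if_neg (Ne.symm hij'), if_pos rfl]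
    show (recv G d j + 0 - ε) / D j = recv G d j / D j - ε / D j
    rw [add_zero, sub_div]
  have hρm : ∀ m, m ≠ i → m ≠ j → ratio G D d' m = ρ m := by
    intro m hmi hmj
    show recv G d' m / D m = recv G d m / D m
    rw [hrecv m, if_neg hmi, if_neg hmj, add_zero, sub_zero]
  -- decompose the universe multiset
  set R : Multiset V := (Finset.univ.val.erase i).erase j with hR
  have hju : j ∈ Finset.univ.val.erase i :=
    (Multiset.mem_erase_of_ne (Ne.symm hij')).2 (Finset.mem_univ_val j)
  have hdecomp : (Finset.univ.val : Multiset V) = i ::ₘ j ::ₘ R := by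
    rw [hR, Multiset.cons_erase hju, Multiset.cons_erase (Finset.mem_univ_val i)]
  have hnodup : (Finset.univ.val : Multiset V).Nodup := Finset.univ.nodup
  have hRmem : ∀ x ∈ R, x ≠ i ∧ x ≠ j := by
    intro x hx
    constructor
    · rintro rfl
      exact hnodup.notMem_erase (Multiset.mem_of_mem_erase hx)
    · rintro rfl
      exact (hnodup.erase i).notMem_erase hx
  have hmapR : R.map (ratio G D d') = R.map ρ :=
    Multiset.map_congr rfl (fun x hx => hρm x (hRmem x hx).1 (hRmem x hx).2)
  have hlist : sortedRatios G D d = ((ρ i) ::ₘ (ρ j) ::ₘ R.map ρ).sort (· ≤ ·) := by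
    unfold sortedRatios
    rw [hdecomp, Multiset.map_cons, Multiset.map_cons]
  have hlist' : sortedRatios G D d'
      = ((ρ i + ε / D i) ::ₘ (ρ j - ε / D j) ::ₘ R.map ρ).sort (· ≤ ·) := by
    unfold sortedRatios
    rw [hdecomp, Multiset.map_cons, Multiset.map_cons, hmapR, hρi, hρj]
  apply hbest d' halloc'
  rw [hlist, hlist']
  exact lexM (R.map ρ) (ρ i) (ρ j) (ρ i + ε / D i) (ρ j - ε / D j)
    (lt_add_of_pos_right _ (div_pos hεpos (hD i))) hij (by linarith)

theorem stmt19 [Fintype V] [Nonempty V] [DecidableEq V] (G : SimpleGraph V) [DecidableRel G.Adj]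
    (hcard : 1 < Fintype.card V) (hcomp : ∀ i j : V, i ≠ j → G.Adj i j)
    (D : V → ℝ) (hD : ∀ i, 0 < D i) (d : V → V → ℝ) (hopt : LexOpt G D d) :
    (Finset.univ.image (ratio G D d)).card ≤ 2 ∧
    ((Finset.univ.image (ratio G D d)).card = 2 → (minSet G D d).card = 1) := by
  have hnn : ∀ x y : V, 0 ≤ d x y := hopt.1.1
  set ρ : V → ℝ := ratio G D d with hρdef
  have hρ0 : ∀ m, 0 ≤ ρ m := fun m =>
    div_nonneg (Finset.sum_nonneg fun x _ => hnn x m) (hD m).le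
  have hsup : ∀ jj : V, 0 < ρ jj → ∃ kk, kk ≠ jj ∧ 0 < d kk jj := by
    intro jj hjj
    have hr : 0 < recv G d jj := by
      by_contra h
      push_neg at h
      have h2 : ρ jj ≤ 0 := by
        show recv G d jj / D jj ≤ 0
        exact div_nonpos_of_nonpos_of_nonneg h (hD jj).le
      linarith
    by_contra hno
    push_neg at hno
    have hle : recv G d jj ≤ 0 := by
      apply Finset.sum_nonpos
      intro x hx
      have hne : x ≠ jj := by
        intro h
        rw [h, SimpleGraph.mem_neighborFinset] at hx
        exact G.loopless.irrefl jj hx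
      exact hno x hne
    linarith
  have h3 : ∀ u v w : V, ρ u < ρ v → ρ v < ρ w → False := by
    intro u v w huv hvw
    have hw : 0 < ρ w := lt_of_le_of_lt (hρ0 u) (huv.trans hvw)
    obtain ⟨kk, hkw, hk⟩ := hsup w hw
    by_cases hku : kk = u
    · subst hku
      have huv' : kk ≠ v := by rintro rfl; exact lt_irrefl _ huv
      exact absurd (key G hcomp D hD d hopt v w kk hvw huv' hkw) hk.ne'
    · exact absurd (key G hcomp D hD d hopt u w kk (huv.trans hvw) hku hkw) hk.ne'
  constructor
  · by_contra hgt
    push_neg at hgt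
    set s := Finset.univ.image ρ with hs
    have hne : s.Nonempty := ⟨ρ (Classical.arbitrary V), Finset.mem_image_of_mem ρ (Finset.mem_univ _)⟩
    have h1c : 1 < s.card := by omega
    have hmM : s.min' hne < s.max' hne := Finset.min'_lt_max'_of_card s h1c
    have hm : s.min' hne ∈ s := Finset.min'_mem s hne
    have hM : s.max' hne ∈ s := Finset.max'_mem s hne
    have hm' : s.min' hne ∈ s.erase (s.max' hne) := Finset.mem_erase.2 ⟨ne_of_lt hmM, hm⟩
    have hcard2 : 0 < ((s.erase (s.max' hne)).erase (s.min' hne)).card := by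
      rw [Finset.card_erase_of_mem hm', Finset.card_erase_of_mem hM]
      omega
    obtain ⟨x, hx⟩ := Finset.card_pos.1 hcard2
    have hxm : x ≠ s.min' hne := (Finset.mem_erase.1 hx).1
    have hxs' : x ∈ s.erase (s.max' hne) := (Finset.mem_erase.1 hx).2
    have hxM : x ≠ s.max' hne := (Finset.mem_erase.1 hxs').1
    have hxs : x ∈ s := (Finset.mem_erase.1 hxs').2
    have h1 : s.min' hne < x := lt_of_le_of_ne (Finset.min'_le s x hxs) (Ne.symm hxm)
    have h2 : x < s.max' hne := lt_of_le_of_ne (Finset.le_max' s x hxs) hxM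
    obtain ⟨u, -, hu⟩ := Finset.mem_image.1 hm
    obtain ⟨v, -, hv⟩ := Finset.mem_image.1 hxs
    obtain ⟨w, -, hw⟩ := Finset.mem_image.1 hM
    exact h3 u v w (by rw [hu, hv]; exact h1) (by rw [hv, hw]; exact h2)
  · intro hc2
    obtain ⟨i₀, -, hi₀⟩ := Finset.exists_mem_eq_inf' (Finset.univ_nonempty (α := V)) ρ
    have hi₀m : i₀ ∈ minSet G D d := Finset.mem_filter.2 ⟨Finset.mem_univ _, hi₀.symm⟩
    have hj : ∃ j : V, minRatio G D d < ρ j := by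
      obtain ⟨a, ha, b, hb, hab⟩ := Finset.one_lt_card.1 (by omega : 1 < (Finset.univ.image ρ).card)
      have hv : ∃ v ∈ Finset.univ.image ρ, v ≠ minRatio G D d := by
        by_cases h : a = minRatio G D d
        · exact ⟨b, hb, fun hh => hab ((hh.trans h.symm).symm ▸ rfl)⟩
        · exact ⟨a, ha, h⟩
      obtain ⟨v0, hv0s, hv0⟩ := hv
      obtain ⟨j, -, hjv⟩ := Finset.mem_image.1 hv0s
      refine ⟨j, ?_⟩
      have hle : minRatio G D d ≤ ρ j := Finset.inf'_le ρ (Finset.mem_univ j)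
      rw [hjv]
      exact lt_of_le_of_ne (hjv ▸ hle) (Ne.symm hv0)
    obtain ⟨j, hjgt⟩ := hj
    have hmineq : minRatio G D d = ρ i₀ := hi₀
    have hjpos : 0 < ρ j := lt_of_le_of_lt (by rw [hmineq]; exact hρ0 i₀) hjgt
    obtain ⟨kk, hkj, hk⟩ := hsup j hjpos
    have hone : (minSet G D d).card ≤ 1 := by
      by_contra hgt
      push_neg at hgt
      obtain ⟨a, ha, b, hb, hab⟩ := Finset.one_lt_card.1 hgt
      have hρa : ρ a = minRatio G D d := (Finset.mem_filter.1 ha).2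
      have hρb : ρ b = minRatio G D d := (Finset.mem_filter.1 hb).2
      by_cases hka : kk = a
      · have hkb : kk ≠ b := hka ▸ hab
        exact absurd (key G hcomp D hD d hopt b j kk (by show ρ b < ρ j; rw [hρb]; exact hjgt) hkb hkj) hk.ne'
      · exact absurd (key G hcomp D hD d hopt a j kk (by show ρ a < ρ j; rw [hρa]; exact hjgt) hka hkj) hk.ne'
    have hposc : 0 < (minSet G D d).card := Finset.card_pos.2 ⟨i₀, hi₀m⟩
    omega
end
end
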